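/- Let G and H be groups and let φ : G →* H and ψ : H →* G be homomorphisms such that for all x ∈ G, x⁻¹ · ψ(φ(x)) lies in the second hypercenter ζ₂(G) (the second term of the upper central series of G) and for all y ∈ H, y⁻¹ · φ(ψ(y)) lies in ζ₂(H). Define the action of H on G by x^y := ψ(y)⁻¹ x ψ(y) and the action of G on H by y^x := φ(x)⁻¹ y φ(x). Then these actions are compatible, i.e., for all x, x₁ ∈ G and y, y₁ ∈ H: x^{(y^{x₁})} = ((x^{x₁⁻¹})^y)^{x₁} and y^{(x^{y₁})} = ((y^{y₁⁻¹})^x)^{y₁}. -/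

import Mathlib

/-- Conjugation by `z⁻¹ * v * z` equals conjugation by `v` when `z` is in the
second hypercenter, since `[z, v]` is central. -/
lemma conj_eq_of_mem_hypercenter {G : Type*} [Group G] {z : G}
    (hz : z ∈ upperCentralSeries G 2) (v x : G) :
    (z⁻¹ * v * z)⁻¹ * x * (z⁻¹ * v * z) = v⁻¹ * x * v := by
  have h := (mem_upperCentralSeries_succ_iff).mp hz v
  rw [upperCentralSeries_one] at h
  have hc := Subgroup.mem_center_iff.mp h
  have key : z⁻¹ * v * z = (z * v * z⁻¹ * v⁻¹)⁻¹ * v := by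
    have h1 := hc z⁻¹
    apply mul_left_cancel (a := z * v * z⁻¹ * v⁻¹)
    calc (z * v * z⁻¹ * v⁻¹) * (z⁻¹ * v * z)
        = ((z * v * z⁻¹ * v⁻¹) * z⁻¹) * (v * z) := by group
      _ = (z⁻¹ * (z * v * z⁻¹ * v⁻¹)) * (v * z) := by rw [commutatorElement_def] at h1; rw [← h1]
      _ = (z * v * z⁻¹ * v⁻¹) * ((z * v * z⁻¹ * v⁻¹)⁻¹ * v) := by group
  rw [key]
  have h2 := hc x
  calc ((z * v * z⁻¹ * v⁻¹)⁻¹ * v)⁻¹ * x * ((z * v * z⁻¹ * v⁻¹)⁻¹ * v)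
      = v⁻¹ * ((z * v * z⁻¹ * v⁻¹) * x) * (z * v * z⁻¹ * v⁻¹)⁻¹ * v := by group
    _ = v⁻¹ * (x * (z * v * z⁻¹ * v⁻¹)) * (z * v * z⁻¹ * v⁻¹)⁻¹ * v := by rw [commutatorElement_def] at h2; rw [← h2]
    _ = v⁻¹ * x * v := by group

theorem compatible_of_hypercenter_congr {G H : Type*} [Group G] [Group H]
    (φ : G →* H) (ψ : H →* G)
    (hG : ∀ x : G, x⁻¹ * ψ (φ x) ∈ upperCentralSeries G 2)
    (hH : ∀ y : H, y⁻¹ * φ (ψ y) ∈ upperCentralSeries H 2) :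
    (∀ (x x₁ : G) (y : H),
        (ψ ((φ x₁)⁻¹ * y * φ x₁))⁻¹ * x * ψ ((φ x₁)⁻¹ * y * φ x₁) =
          x₁⁻¹ * ((ψ y)⁻¹ * (x₁ * x * x₁⁻¹) * ψ y) * x₁) ∧
    (∀ (y y₁ : H) (x : G),
        (φ ((ψ y₁)⁻¹ * x * ψ y₁))⁻¹ * y * φ ((ψ y₁)⁻¹ * x * ψ y₁) =
          y₁⁻¹ * ((φ x)⁻¹ * (y₁ * y * y₁⁻¹) * φ x) * y₁) := by
  constructor
  · intro x x₁ y
    have hz := hG x₁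
    have e : ψ ((φ x₁)⁻¹ * y * φ x₁) =
        (x₁⁻¹ * ψ (φ x₁))⁻¹ * (x₁⁻¹ * ψ y * x₁) * (x₁⁻¹ * ψ (φ x₁)) := by
      simp [map_mul]; group
    rw [e, conj_eq_of_mem_hypercenter hz]
    group
  · intro y y₁ x
    have hz := hH y₁
    have e : φ ((ψ y₁)⁻¹ * x * ψ y₁) =
        (y₁⁻¹ * φ (ψ y₁))⁻¹ * (y₁⁻¹ * φ x * y₁) * (y₁⁻¹ * φ (ψ y₁)) := by
      simp [map_mul]; group
    rw [e, conj_eq_of_mem_hypercenter hz]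
    group
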